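/- arXiv:2001.05739 — 3 statements merged into one kernel-verified Lean document; each statement's English description precedes it below -/
import Mathlib

section
/- Let ρ > 0, μ > 0, Y, Z be symmetric matrices, and suppose the symmetric matrix V̂ᵀ Z V̂ + ρ V̂ᵀ Y V̂ has spectral decomposition P D Pᵀ with P orthogonal and D diagonal. Define R̄ diagonal by R̄_ii = (D_ii + √(D_ii² + 4ρμ))/(2ρ) and R = P R̄ Pᵀ. Then R is positive definite and satisfies ρ R − μ R⁻¹ = V̂ᵀ Z V̂ + ρ V̂ᵀ Y V̂. -/
open Matrix

lemma posdef_conj_aux {n : ℕ} {A P : Matrix (Fin n) (Fin n) ℝ} (hA : A.PosDef)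
    (hP : Pᵀ * P = 1) : (P * A * Pᵀ).PosDef := by
  have hPPt : P * Pᵀ = 1 := mul_eq_one_comm.mp hP
  refine PosDef.of_dotProduct_mulVec_pos ?_ ?_
  · have hAe : Aᵀ = A := hA.isHermitian.eq
    show (P * A * Pᵀ)ᴴ = P * A * Pᵀ
    have hct : ∀ (M : Matrix (Fin n) (Fin n) ℝ), Mᴴ = Mᵀ := fun M => rfl
    simp only [conjTranspose_mul, hct, transpose_mul, transpose_transpose, hAe, Matrix.mul_assoc]
  · intro x hx
    have hy : Pᵀ *ᵥ x ≠ 0 := by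
      intro h
      apply hx
      have := congrArg (fun v => P *ᵥ v) h
      simpa [mulVec_mulVec, hPPt] using this
    have key : star x ⬝ᵥ (P * A * Pᵀ) *ᵥ x
        = star (Pᵀ *ᵥ x) ⬝ᵥ A *ᵥ (Pᵀ *ᵥ x) := by
      rw [star_trivial, star_trivial, ← mulVec_mulVec, ← mulVec_mulVec, dotProduct_mulVec,
        ← mulVec_transpose]
    rw [key]
    exact hA.dotProduct_mulVec_pos hy

theorem stmt_2 (m k : ℕ) (ρ μ : ℝ) (hρ : 0 < ρ) (hμ : 0 < μ)
    (Y Z : Matrix (Fin m) (Fin m) ℝ) (hY : Y.IsSymm) (hZ : Z.IsSymm)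
    (Vhat : Matrix (Fin m) (Fin k) ℝ) (hV : Vhatᵀ * Vhat = 1)
    (P D : Matrix (Fin k) (Fin k) ℝ) (hP : Pᵀ * P = 1) (hD : D.IsDiag)
    (hdecomp : Vhatᵀ * Z * Vhat + ρ • (Vhatᵀ * Y * Vhat) = P * D * Pᵀ)
    (Rbar : Matrix (Fin k) (Fin k) ℝ)
    (hRbar : Rbar = Matrix.diagonal
      (fun i => (D i i + Real.sqrt ((D i i) ^ 2 + 4 * ρ * μ)) / (2 * ρ)))
    (R : Matrix (Fin k) (Fin k) ℝ) (hR : R = P * Rbar * Pᵀ) :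
    R.PosDef ∧ ρ • R - μ • R⁻¹ = Vhatᵀ * Z * Vhat + ρ • (Vhatᵀ * Y * Vhat) := by
  set f : Fin k → ℝ := fun i => (D i i + Real.sqrt ((D i i) ^ 2 + 4 * ρ * μ)) / (2 * ρ) with hf
  have hs2 : ∀ i, (Real.sqrt ((D i i) ^ 2 + 4 * ρ * μ)) ^ 2 = (D i i) ^ 2 + 4 * ρ * μ :=
    fun i => Real.sq_sqrt (by positivity)
  have hds : ∀ i, 0 < D i i + Real.sqrt ((D i i) ^ 2 + 4 * ρ * μ) := by
    intro i
    have h1 : |D i i| < Real.sqrt ((D i i) ^ 2 + 4 * ρ * μ) := by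
      rw [← Real.sqrt_sq_eq_abs]
      exact Real.sqrt_lt_sqrt (sq_nonneg _) (by nlinarith)
    have := neg_abs_le (D i i)
    linarith
  have hfpos : ∀ i, 0 < f i := fun i => div_pos (hds i) (by linarith)
  have hPPt : P * Pᵀ = 1 := mul_eq_one_comm.mp hP
  have hRbarPD : Rbar.PosDef := by
    rw [hRbar]; exact Matrix.PosDef.diagonal hfpos
  have hRPD : R.PosDef := by rw [hR]; exact posdef_conj_aux hRbarPD hP
  refine ⟨hRPD, ?_⟩
  -- inverse
  set S : Matrix (Fin k) (Fin k) ℝ := Matrix.diagonal (fun i => (f i)⁻¹) with hS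
  have hRbarS : Rbar * S = 1 := by
    have : (fun i => f i * (f i)⁻¹) = fun _ => (1:ℝ) :=
      funext fun i => mul_inv_cancel₀ (hfpos i).ne'
    rw [hRbar, hS, diagonal_mul_diagonal, this, diagonal_one]
  have hRinv : R⁻¹ = P * S * Pᵀ := by
    apply Matrix.inv_eq_right_inv
    rw [hR]
    calc P * Rbar * Pᵀ * (P * S * Pᵀ) = P * Rbar * (Pᵀ * P) * S * Pᵀ := by
          simp only [mul_assoc]
      _ = P * (Rbar * S) * Pᵀ := by rw [hP]; simp only [mul_one, mul_assoc]
      _ = 1 := by rw [hRbarS, mul_one, hPPt]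
  have hscal : ∀ i, ρ * f i - μ * (f i)⁻¹ = D i i := by
    intro i
    have h2 := hs2 i
    have h3 := hds i
    have h4 := hfpos i
    rw [hf]
    field_simp
    rw [show ρ * 4 * μ = 4 * ρ * μ by ring, div_eq_iff h3.ne']
    nlinarith [hs2 i, hds i]
  have hDdiag : Matrix.diagonal (fun i => ρ * f i - μ * (f i)⁻¹) = D := by
    ext i j
    by_cases h : i = j
    · subst h; simp [hscal i]
    · simp [Matrix.diagonal_apply_ne _ h, (hD h).symm]
  rw [hdecomp, hRinv, hR]
  calc ρ • (P * Rbar * Pᵀ) - μ • (P * S * Pᵀ)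
      = P * (ρ • Rbar - μ • S) * Pᵀ := by
        simp only [Matrix.mul_sub, Matrix.sub_mul, Matrix.mul_smul, Matrix.smul_mul]
    _ = P * D * Pᵀ := by
        rw [hRbar, hS, ← hDdiag]
        congr 2
        ext i j
        rcases eq_or_ne i j with h | h
        · subst h; simp
        · simp [Matrix.diagonal_apply_ne _ h]
end

section
/- The set of n×n permutation matrices equals the intersection of the orthogonal matrices {X : XXᵀ = I}, the doubly stochastic row/column-sum constraints {X : Xe = Xᵀe = e}, and the nonnegative matrices {X : X ≥ 0 entrywise}. -/
open Matrix

lemma permEntry (n : ℕ) (σ : Equiv.Perm (Fin n)) (i j : Fin n) :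
    (σ.permMatrix ℝ) i j = if σ i = j then 1 else 0 := by
  simp [Equiv.Perm.permMatrix, PEquiv.toMatrix_apply, Equiv.toPEquiv, Option.mem_def]

theorem stmt_5 (n : ℕ) :
    {X : Matrix (Fin n) (Fin n) ℝ | ∃ σ : Equiv.Perm (Fin n), X = σ.permMatrix ℝ} =
      {X : Matrix (Fin n) (Fin n) ℝ | X * Xᵀ = 1} ∩
      {X : Matrix (Fin n) (Fin n) ℝ |
        X.mulVec (fun _ => 1) = (fun _ => 1) ∧ Xᵀ.mulVec (fun _ => 1) = (fun _ => 1)} ∩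
      {X : Matrix (Fin n) (Fin n) ℝ | ∀ i j, 0 ≤ X i j} := by
  ext X
  simp only [Set.mem_setOf_eq, Set.mem_inter_iff]
  constructor
  · rintro ⟨σ, rfl⟩
    refine ⟨⟨?_, ?_, ?_⟩, ?_⟩
    · ext i j
      simp only [mul_apply, transpose_apply, permEntry, one_apply]
      rw [Finset.sum_eq_single (σ i)] <;> simp +contextual [eq_comm, σ.injective.eq_iff]
    · ext i
      simp only [mulVec, dotProduct, permEntry, mul_one]
      simp
    · ext j
      simp only [mulVec, dotProduct, transpose_apply, permEntry, mul_one]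
      rw [Finset.sum_eq_single (σ.symm j)] <;> simp +contextual [Equiv.eq_symm_apply]
    · intro i j
      rw [permEntry]
      positivity
  · rintro ⟨⟨horth, hrow, hcol⟩, hpos⟩
    -- row sums are 1
    have hrow' : ∀ i, ∑ k, X i k = 1 := by
      intro i
      have := congrFun hrow i
      simpa [mulVec, dotProduct] using this
    have hcol' : ∀ j, ∑ i, X i j = 1 := by
      intro j
      have := congrFun hcol j
      simpa [mulVec, dotProduct] using this
    -- entries ≤ 1
    have hle : ∀ i k, X i k ≤ 1 := by
      intro i k
      calc X i k ≤ ∑ k', X i k' :=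
            Finset.single_le_sum (fun k' _ => hpos i k') (Finset.mem_univ k)
        _ = 1 := hrow' i
    -- sum of squares of each row is 1
    have hsq : ∀ i, ∑ k, X i k * X i k = 1 := by
      intro i
      have := congrFun (congrFun horth i) i
      simpa [mul_apply, transpose_apply, one_apply] using this
    -- each entry is 0 or 1
    have h01 : ∀ i k, X i k = 0 ∨ X i k = 1 := by
      intro i k
      have hz : ∑ k', X i k' * (1 - X i k') = 0 := by
        have : ∑ k', X i k' * (1 - X i k') = (∑ k', X i k') - ∑ k', X i k' * X i k' := by
          rw [← Finset.sum_sub_distrib]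
          congr 1; ext k'; ring
        rw [this, hrow' i, hsq i, sub_self]
      have hterm : X i k * (1 - X i k) = 0 := by
        have := (Finset.sum_eq_zero_iff_of_nonneg (fun k' _ =>
          mul_nonneg (hpos i k') (by linarith [hle i k']))).mp hz k (Finset.mem_univ k)
        exact this
      rcases mul_eq_zero.mp hterm with h | h
      · exact Or.inl h
      · exact Or.inr (by linarith)
    -- exists a unique 1 per row
    have hex : ∀ i, ∃ k, X i k = 1 := by
      intro i
      by_contra h
      push_neg at h
      have : ∑ k, X i k = 0 := Finset.sum_eq_zero fun k _ =>
        (h01 i k).resolve_right (h k)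
      rw [hrow' i] at this
      norm_num at this
    choose f hf using hex
    -- f is injective: distinct rows orthogonal
    have hinj : Function.Injective f := by
      intro i j hij
      by_contra hne
      have := congrFun (congrFun horth i) j
      simp only [mul_apply, transpose_apply, one_apply, if_neg hne] at this
      have hterm : X i (f i) * X j (f i) = 0 := by
        have := (Finset.sum_eq_zero_iff_of_nonneg (fun k _ =>
          mul_nonneg (hpos i k) (hpos j k))).mp this (f i) (Finset.mem_univ (f i))
        exact this
      have hfj : X j (f i) = 1 := by rw [hij]; exact hf j
      rw [hf i, hfj] at hterm
      norm_num at hterm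
    let σ : Equiv.Perm (Fin n) := Equiv.ofBijective f (Finite.injective_iff_bijective.mp hinj)
    refine ⟨σ, ?_⟩
    ext i j
    rw [permEntry]
    have hσ : σ i = f i := rfl
    rw [hσ]
    by_cases h : f i = j
    · rw [if_pos h, ← h, hf i]
    · rw [if_neg h]
      rcases h01 i j with h0 | h1
      · exact h0
      · -- row sum 1 with X i (f i) = 1 and X i j = 1, j ≠ f i: contradiction
        exfalso
        have : (2 : ℝ) ≤ ∑ k, X i k := by
          have := Finset.add_sum_erase _ (fun k => X i k) (Finset.mem_univ (f i))
          have h2 := Finset.single_le_sum (f := fun k => X i k)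
            (fun k _ => hpos i k) (a := j)
            (Finset.mem_erase.mpr ⟨fun hc => h hc.symm, Finset.mem_univ j⟩)
          calc (2:ℝ) = 1 + 1 := by norm_num
            _ ≤ X i (f i) + ∑ k ∈ Finset.univ.erase (f i), X i k := by
                beta_reduce at h2; rw [h1] at h2; rw [hf i]; linarith [h2]
            _ = ∑ k, X i k := this
        rw [hrow' i] at this
        norm_num at this
end

section
/- Saddle point theorem for the barrier Lagrangian: fix μ > 0, let L₀(R,Y,Z) = ⟨L_Q, Y⟩ + 𝕀(Y) − μ log(det R) + ⟨Z, Y − V̂ R V̂ᵀ⟩, where 𝕀(Y) = 0 if 𝒢_J(Y) = E₀₀ and +∞ otherwise. Suppose (R*, Z*) satisfy: (−V̂ᵀZ*V̂)R* = μI, 𝒢_J(V̂R*V̂ᵀ) = E₀₀, 𝒢_J(L_Q + Z*) = L_Q + Z*, R* positive definite, and −V̂ᵀZ*V̂ positive semidefinite. Set Y* = V̂R*V̂ᵀ. Then max_Z L₀(R*,Y*,Z) = L₀(R*,Y*,Z*) = min_{R ≻ 0, Y} L₀(R,Y,Z*), i.e., (R*,Y*,Z*) is a saddle point of L₀. -/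
open Matrix

open Classical in
/-- The gangster operator: keeps entries indexed by `J ∪ Jᵀ`, zeros out the rest. -/
noncomputable def gangster {m : ℕ} (J : Set (Fin m × Fin m))
    (Y : Matrix (Fin m) (Fin m) ℝ) : Matrix (Fin m) (Fin m) ℝ :=
  Matrix.of fun i j => if (i, j) ∈ J ∨ (j, i) ∈ J then Y i j else 0

open Classical in
/-- The unaugmented barrier Lagrangian `L₀(R,Y,Z) = ⟨L_Q,Y⟩ + 𝕀(Y) − μ log det R
+ ⟨Z, Y − V̂ R V̂ᵀ⟩`, with the indicator taking the value `+∞`. -/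
noncomputable def L0 {m k : ℕ} (J : Set (Fin m × Fin m)) (μ : ℝ)
    (LQ E₀₀ : Matrix (Fin m) (Fin m) ℝ) (Vhat : Matrix (Fin m) (Fin k) ℝ)
    (R : Matrix (Fin k) (Fin k) ℝ) (Y Z : Matrix (Fin m) (Fin m) ℝ) : EReal :=
  (((LQ * Y).trace - μ * Real.log R.det
      + (Z * (Y - Vhat * R * Vhatᵀ)).trace : ℝ) : EReal)
    + (if gangster J Y = E₀₀ then (0 : EReal) else ⊤)

/-- `log det M ≤ tr M − k` for a positive definite `M`. -/
lemma logdet_le_trace_sub {k : ℕ} {M : Matrix (Fin k) (Fin k) ℝ} (hM : M.PosDef) :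
    Real.log M.det ≤ M.trace - k := by
  have hH := hM.isHermitian
  have hdet : M.det = ∏ i, hH.eigenvalues i := by
    simpa using hH.det_eq_prod_eigenvalues
  have htr : M.trace = ∑ i, hH.eigenvalues i := by
    nth_rewrite 1 [hH.spectral_theorem, Unitary.conjStarAlgAut_apply]
    rw [Matrix.trace_mul_cycle]
    rw [(Matrix.mem_unitaryGroup_iff').mp (hH.eigenvectorUnitary).2]
    simp [Matrix.trace_diagonal]
  calc Real.log M.det = ∑ i, Real.log (hH.eigenvalues i) := by
        rw [hdet]; exact Real.log_prod (fun i _ => (hM.eigenvalues_pos i).ne')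
    _ ≤ ∑ i, (hH.eigenvalues i - 1) :=
        Finset.sum_le_sum fun i _ => Real.log_le_sub_one_of_pos (hM.eigenvalues_pos i)
    _ = M.trace - k := by simp [htr, Finset.sum_sub_distrib]

/-- Symmetric conjugation by an invertible symmetric matrix preserves positive definiteness. -/
lemma posDef_conj {k : ℕ} {R B : Matrix (Fin k) (Fin k) ℝ} (hR : R.PosDef)
    (hB : IsUnit B.det) (hBs : Bᵀ = B) : (B * R * B).PosDef := by
  refine Matrix.posDef_iff_dotProduct_mulVec.mpr ⟨?_, ?_⟩
  · have h := Matrix.isHermitian_mul_mul_conjTranspose B hR.1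
    rwa [Matrix.conjTranspose_eq_transpose_of_trivial, hBs] at h
  · intro x hx
    have hinj : Function.Injective (B.mulVec) :=
      Matrix.mulVec_injective_iff_isUnit.mpr ((Matrix.isUnit_iff_isUnit_det _).mpr hB)
    have hBx : B *ᵥ x ≠ 0 := by
      intro h; exact hx (hinj (by simpa using h))
    have key : star x ⬝ᵥ ((B * R * B) *ᵥ x)
        = star (B *ᵥ x) ⬝ᵥ (R *ᵥ (B *ᵥ x)) := by
      rw [← Matrix.mulVec_mulVec, ← Matrix.mulVec_mulVec, Matrix.dotProduct_mulVec]
      congr 1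
      simp [star_trivial]
      rw [← Matrix.mulVec_transpose, hBs]
    rw [key]
    exact hR.dotProduct_mulVec_pos hBx

/-- The trace against a gangster-fixed matrix only depends on the gangster part. -/
lemma gangster_trace_congr {m : ℕ} {J : Set (Fin m × Fin m)}
    {A Y Y' : Matrix (Fin m) (Fin m) ℝ}
    (hA : gangster J A = A) (hY : gangster J Y = gangster J Y') :
    (A * Y).trace = (A * Y').trace := by
  classical
  simp only [Matrix.trace, Matrix.diag, Matrix.mul_apply]
  refine Finset.sum_congr rfl fun i _ => Finset.sum_congr rfl fun j _ => ?_
  by_cases h : (i, j) ∈ J ∨ (j, i) ∈ J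
  · have h' : (j, i) ∈ J ∨ (i, j) ∈ J := h.symm
    have hy := congrFun (congrFun hY j) i
    simp only [gangster, Matrix.of_apply, if_pos h'] at hy
    rw [hy]
  · have hA0 : A i j = 0 := by
      conv_lhs => rw [← hA]
      simp [gangster, h]
    simp [hA0]

theorem stmt_14 (m k : ℕ) (J : Set (Fin m × Fin m)) (μ : ℝ) (hμ : 0 < μ)
    (LQ E₀₀ : Matrix (Fin m) (Fin m) ℝ) (hLQ : LQ.IsSymm)
    (hE : E₀₀.IsSymm) (hGE : gangster J E₀₀ = E₀₀)
    (Vhat : Matrix (Fin m) (Fin k) ℝ) (hV : Vhatᵀ * Vhat = 1)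
    (Rstar : Matrix (Fin k) (Fin k) ℝ) (Zstar : Matrix (Fin m) (Fin m) ℝ)
    (hZs : Zstar.IsSymm)
    (hcrit : (-(Vhatᵀ * Zstar * Vhat)) * Rstar = μ • (1 : Matrix (Fin k) (Fin k) ℝ))
    (hfeas : gangster J (Vhat * Rstar * Vhatᵀ) = E₀₀)
    (hLZ : gangster J (LQ + Zstar) = LQ + Zstar)
    (hRpd : Rstar.PosDef)
    (hpsd : (-(Vhatᵀ * Zstar * Vhat)).PosSemidef)
    (Ystar : Matrix (Fin m) (Fin m) ℝ) (hYs : Ystar = Vhat * Rstar * Vhatᵀ) :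
    (∀ Z : Matrix (Fin m) (Fin m) ℝ, Z.IsSymm →
        L0 J μ LQ E₀₀ Vhat Rstar Ystar Z ≤ L0 J μ LQ E₀₀ Vhat Rstar Ystar Zstar) ∧
    (∀ (R : Matrix (Fin k) (Fin k) ℝ) (Y : Matrix (Fin m) (Fin m) ℝ),
        R.IsSymm → R.PosDef → Y.IsSymm →
        L0 J μ LQ E₀₀ Vhat Rstar Ystar Zstar ≤ L0 J μ LQ E₀₀ Vhat R Y Zstar) := by
  subst hYs
  -- basic facts about Rstar
  have hRsdet : (0:ℝ) < Rstar.det := hRpd.det_pos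
  have hRsUnit : IsUnit Rstar.det := isUnit_iff_ne_zero.mpr hRsdet.ne'
  have hinv : Rstar * Rstar⁻¹ = 1 := Matrix.mul_nonsing_inv _ hRsUnit
  have hinv' : Rstar⁻¹ * Rstar = 1 := Matrix.nonsing_inv_mul _ hRsUnit
  -- Vhatᵀ Zstar Vhat = - μ • Rstar⁻¹
  have hSval : Vhatᵀ * Zstar * Vhat = -(μ • Rstar⁻¹) := by
    have h1 : -(Vhatᵀ * Zstar * Vhat) = μ • Rstar⁻¹ := by
      calc -(Vhatᵀ * Zstar * Vhat)
          = -(Vhatᵀ * Zstar * Vhat) * (Rstar * Rstar⁻¹) := by rw [hinv, mul_one]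
        _ = (-(Vhatᵀ * Zstar * Vhat) * Rstar) * Rstar⁻¹ := by rw [mul_assoc]
        _ = μ • Rstar⁻¹ := by rw [hcrit, Matrix.smul_mul, one_mul]
    rw [← h1, neg_neg]
  -- trace identity for the Z-term
  have htrZ : ∀ R' : Matrix (Fin k) (Fin k) ℝ,
      (Zstar * (Vhat * R' * Vhatᵀ)).trace = -(μ * (Rstar⁻¹ * R').trace) := by
    intro R'
    have h1 : Zstar * (Vhat * R' * Vhatᵀ) = (Zstar * Vhat * R') * Vhatᵀ := by
      simp only [Matrix.mul_assoc]
    rw [h1, Matrix.trace_mul_comm,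
      show Vhatᵀ * (Zstar * Vhat * R') = (Vhatᵀ * Zstar * Vhat) * R' by
        simp only [Matrix.mul_assoc], hSval]
    simp [Matrix.neg_mul, Matrix.smul_mul, smul_eq_mul, Matrix.trace_smul]
  have htrZs : (Zstar * (Vhat * Rstar * Vhatᵀ)).trace = -(μ * k) := by
    rw [htrZ, hinv', Matrix.trace_one]
    simp
  constructor
  · -- max over Z : the Z-term vanishes at Ystar
    intro Z _
    simp only [L0, sub_self, mul_zero, Matrix.mul_zero, Matrix.trace_zero]
    exact le_refl _
  · -- min over (R, Y)
    intro R Y hRs hRpd2 hYsym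
    by_cases hg : gangster J Y = E₀₀
    · -- both indicators are 0 ; reduce to a real inequality
      have hgs : gangster J (Vhat * Rstar * Vhatᵀ) = E₀₀ := hfeas
      simp only [L0, if_pos hg, if_pos hgs, add_zero, sub_self, Matrix.mul_zero,
        Matrix.trace_zero]
      rw [EReal.coe_le_coe_iff]
      -- the square root of Rstar
      set W := (open scoped MatrixOrder in CFC.sqrt Rstar) with hW
      have hWW : W * W = Rstar := by
        open scoped MatrixOrder in exact CFC.sqrt_mul_sqrt_self Rstar hRpd.posSemidef.nonneg
      have hWs : Wᵀ = W := by
        have h := (open scoped MatrixOrder in (CFC.sqrt_nonneg Rstar).posSemidef).1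
        rw [Matrix.IsHermitian, Matrix.conjTranspose_eq_transpose_of_trivial] at h
        exact h
      have hdetW : W.det * W.det = Rstar.det := by rw [← Matrix.det_mul, hWW]
      have hWdet : W.det ≠ 0 := by
        intro h; rw [h, zero_mul] at hdetW; exact hRsdet.ne' hdetW.symm
      have hWunit : IsUnit W.det := isUnit_iff_ne_zero.mpr hWdet
      have hWinvT : (W⁻¹)ᵀ = W⁻¹ := by rw [Matrix.transpose_nonsing_inv, hWs]
      have hWinvdet : IsUnit (W⁻¹).det := Matrix.isUnit_nonsing_inv_det W hWunit
      -- the conjugated matrix M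
      set M := W⁻¹ * R * W⁻¹ with hM
      have hMpd : M.PosDef := posDef_conj hRpd2 hWinvdet hWinvT
      have htrM : M.trace = (Rstar⁻¹ * R).trace := by
        rw [hM, Matrix.trace_mul_cycle, ← Matrix.mul_inv_rev, hWW]
      have hdetM : M.det = R.det / Rstar.det := by
        rw [hM]
        simp only [Matrix.det_mul, Matrix.det_nonsing_inv, Ring.inverse_eq_inv']
        rw [← hdetW]
        field_simp
      have hRdet : (0:ℝ) < R.det := hRpd2.det_pos
      have hlogM : Real.log M.det = Real.log R.det - Real.log Rstar.det := by
        rw [hdetM, Real.log_div hRdet.ne' hRsdet.ne']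
      have hkey := logdet_le_trace_sub hMpd
      have hkey2 : μ * Real.log R.det - μ * Real.log Rstar.det
          ≤ μ * (Rstar⁻¹ * R).trace - μ * k := by
        have h := mul_le_mul_of_nonneg_left hkey hμ.le
        rw [hlogM, htrM] at h
        nlinarith [h]
      -- trace equality from the gangster structure
      have hYtr : ((LQ + Zstar) * Y).trace
          = ((LQ + Zstar) * (Vhat * Rstar * Vhatᵀ)).trace :=
        gangster_trace_congr hLZ (by rw [hg, hfeas])
      have hYtr' : (LQ * Y).trace + (Zstar * Y).trace
          = (LQ * (Vhat * Rstar * Vhatᵀ)).trace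
            + (Zstar * (Vhat * Rstar * Vhatᵀ)).trace := by
        have := hYtr
        simpa [Matrix.add_mul, Matrix.trace_add] using this
      have hZY : (Zstar * (Y - Vhat * R * Vhatᵀ)).trace
          = (Zstar * Y).trace + μ * (Rstar⁻¹ * R).trace := by
        rw [Matrix.mul_sub, Matrix.trace_sub, htrZ]
        ring
      rw [hZY]
      rw [htrZs] at hYtr'
      linarith [hkey2, hYtr']
    · -- infeasible Y : right-hand side is ⊤
      simp only [L0, if_neg hg, if_pos hfeas, add_zero, EReal.coe_add_top]
      exact le_top
end
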